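/- For all n ≥ 0, the bivariate degenerate Hermite polynomial satisfies H_n(x,y|λ) = Σ_{k=0}^{⌊n/2⌋} n!/((n-2k)! k!) · (log(1+λ)/λ)^{n-k} · x^{n-2k} · y^k, and these polynomials satisfy the generating function identity (1+λ)^{(xt+yt²)/λ} = Σ_{n≥0} H_n(x,y|λ) tⁿ/n! as formal power series in t. -/

import Mathlib

open Real Finset MeasureTheory

noncomputable def dH (l x y : ℝ) (n : ℕ) : ℝ :=
  ∑ k ∈ Finset.range (n / 2 + 1),
    (Nat.factorial n : ℝ) / ((Nat.factorial (n - 2 * k) : ℝ) * (Nat.factorial k : ℝ)) *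
      (Real.log (1 + l) / l) ^ (n - k) * x ^ (n - 2 * k) * y ^ k

set_option maxHeartbeats 1000000 in
theorem stmt0 (l x y : ℝ) (hl : 0 < l) :
    (∀ n : ℕ, dH l x y n =
      ∑ k ∈ Finset.range (n / 2 + 1),
        (Nat.factorial n : ℝ) / ((Nat.factorial (n - 2 * k) : ℝ) * (Nat.factorial k : ℝ)) *
          (Real.log (1 + l) / l) ^ (n - k) * x ^ (n - 2 * k) * y ^ k) ∧
    ∀ t : ℝ, HasSum (fun n : ℕ => dH l x y n * t ^ n / (Nat.factorial n : ℝ))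
      (Real.exp ((x * t + y * t ^ 2) * (Real.log (1 + l) / l))) := by
  refine ⟨fun n => rfl, fun t => ?_⟩
  set c := Real.log (1 + l) / l with hc
  clear_value c
  have hA : HasSum (fun m : ℕ => (x * t * c) ^ m / m.factorial) (Real.exp (x * t * c)) := by
    rw [Real.exp_eq_exp_ℝ]
    exact NormedSpace.expSeries_div_hasSum_exp (x * t * c)
  have hB : HasSum (fun m : ℕ => (y * t ^ 2 * c) ^ m / m.factorial)
      (Real.exp (y * t ^ 2 * c)) := by
    rw [Real.exp_eq_exp_ℝ]
    exact NormedSpace.expSeries_div_hasSum_exp (y * t ^ 2 * c)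
  have hnorm : ∀ a : ℝ, Summable fun m : ℕ => ‖a ^ m / (m.factorial : ℝ)‖ := by
    intro a
    simpa [abs_pow, abs_div, Nat.abs_cast] using Real.summable_pow_div_factorial |a|
  have hsummable : Summable fun p : ℕ × ℕ =>
      ((x * t * c) ^ p.1 / p.1.factorial) * ((y * t ^ 2 * c) ^ p.2 / p.2.factorial) :=
    summable_mul_of_summable_norm (hnorm _) (hnorm _)
  have hprod : HasSum (fun p : ℕ × ℕ =>
      ((x * t * c) ^ p.1 / p.1.factorial) * ((y * t ^ 2 * c) ^ p.2 / p.2.factorial))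
      (Real.exp (x * t * c) * Real.exp (y * t ^ 2 * c)) :=
    hA.mul hB hsummable
  set g : ℕ × ℕ → ℝ := fun p =>
    if 2 * p.2 ≤ p.1 then
      ((x * t * c) ^ (p.1 - 2 * p.2) / (p.1 - 2 * p.2).factorial) *
        ((y * t ^ 2 * c) ^ p.2 / p.2.factorial)
    else 0 with hg
  have hinj : Function.Injective (fun p : ℕ × ℕ => ((p.1 + 2 * p.2, p.2) : ℕ × ℕ)) := by
    intro a b h
    simp only [Prod.mk.injEq] at h
    obtain ⟨h1, h2⟩ := h
    exact Prod.ext (by omega) h2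
  have hgsum : HasSum g (Real.exp (x * t * c) * Real.exp (y * t ^ 2 * c)) := by
    rw [← Function.Injective.hasSum_iff hinj]
    · convert hprod using 1
      funext p
      simp [hg, Nat.add_sub_cancel]
    · intro q hq
      simp only [hg]
      rw [if_neg]
      intro hle
      refine hq ⟨(q.1 - 2 * q.2, q.2), ?_⟩
      have h' : q.1 - 2 * q.2 + 2 * q.2 = q.1 := Nat.sub_add_cancel hle
      simp [Prod.ext_iff, h']
  have hfiber : ∀ n : ℕ, HasSum (fun k => g (n, k)) (dH l x y n * t ^ n / n.factorial) := by
    intro n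
    have hzero : ∀ k ∉ Finset.range (n / 2 + 1), g (n, k) = 0 := by
      intro k hk
      simp only [Finset.mem_range] at hk
      simp only [hg]
      rw [if_neg (by omega)]
    have hsum : ∑ k ∈ Finset.range (n / 2 + 1), g (n, k)
        = dH l x y n * t ^ n / n.factorial := by
      rw [dH, Finset.sum_mul, Finset.sum_div]
      simp only [← hc]
      refine Finset.sum_congr rfl fun k hk => ?_
      simp only [Finset.mem_range] at hk
      have h2k : 2 * k ≤ n := by omega
      simp only [hg]
      rw [if_pos h2k]
      obtain ⟨m, rfl⟩ : ∃ m, n = m + 2 * k := ⟨n - 2 * k, by omega⟩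
      have e1 : m + 2 * k - 2 * k = m := by omega
      have e2 : m + 2 * k - k = m + k := by omega
      rw [e1, e2]
      have hf1 : ((m.factorial : ℝ)) ≠ 0 := Nat.cast_ne_zero.mpr m.factorial_ne_zero
      have hf2 : ((k.factorial : ℝ)) ≠ 0 := Nat.cast_ne_zero.mpr k.factorial_ne_zero
      have hf3 : (((m + 2 * k).factorial : ℝ)) ≠ 0 :=
        Nat.cast_ne_zero.mpr (m + 2 * k).factorial_ne_zero
      field_simp [ne_of_gt hl]
      ring
    exact hsum ▸ hasSum_sum_of_ne_finset_zero hzero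
  have hE : Real.exp (x * t * c) * Real.exp (y * t ^ 2 * c)
      = Real.exp ((x * t + y * t ^ 2) * c) := by
    rw [← Real.exp_add]; ring_nf
  exact hE ▸ hgsum.prod_fiberwise hfiber
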